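/- Let e ∈ ℝ^r and θ̃⁻ ∈ ℝ^p, let F be an r×r real symmetric matrix with F e = L θ̃⁻, and define the updated estimation error θ̃ := θ̃⁻ − P Lᵀ R⁻¹ e. Then the Lyapunov value of the updated error satisfies θ̃ᵀ P⁻¹ θ̃ = θ̃⁻ᵀ (P⁻)⁻¹ θ̃⁻ + eᵀ (F R⁻¹ F − F R⁻¹ − R⁻¹ F + R⁻¹ L P Lᵀ R⁻¹) e. -/

import Mathlib

open Matrix

private lemma ekf_dp_swap {m n : ℕ} (A : Matrix (Fin m) (Fin n) ℝ) (x : Fin n → ℝ)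
    (y : Fin m → ℝ) : (A *ᵥ x) ⬝ᵥ y = x ⬝ᵥ (Aᵀ *ᵥ y) :=
  calc (A *ᵥ x) ⬝ᵥ y = y ⬝ᵥ (A *ᵥ x) := dotProduct_comm _ _
    _ = (y ᵥ* A) ⬝ᵥ x := Matrix.dotProduct_mulVec _ _ _
    _ = (Aᵀ *ᵥ y) ⬝ᵥ x := by rw [Matrix.mulVec_transpose]
    _ = x ⬝ᵥ (Aᵀ *ᵥ y) := dotProduct_comm _ _

/-- Lyapunov value of the updated EKF estimation error:
`θ̃ᵀ P⁻¹ θ̃ = θ̃⁻ᵀ (P⁻)⁻¹ θ̃⁻ + eᵀ (F R⁻¹ F − F R⁻¹ − R⁻¹ F + R⁻¹ L P Lᵀ R⁻¹) e`. -/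
theorem ekf_lyapunov_value_expansion
    (p r : ℕ) (hp : 0 < p) (hr : 0 < r)
    (Pminus : Matrix (Fin p) (Fin p) ℝ) (hPminus : Pminus.PosDef)
    (R : Matrix (Fin r) (Fin r) ℝ) (hR : R.PosDef)
    (L : Matrix (Fin r) (Fin p) ℝ)
    (S : Matrix (Fin r) (Fin r) ℝ) (hS : S = L * Pminus * Lᵀ + R)
    (K : Matrix (Fin p) (Fin r) ℝ) (hK : K = Pminus * Lᵀ * S⁻¹)
    (P : Matrix (Fin p) (Fin p) ℝ) (hP : P = (1 - K * L) * Pminus)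
    (e : Fin r → ℝ) (θminus : Fin p → ℝ)
    (F : Matrix (Fin r) (Fin r) ℝ) (hF : F.IsSymm)
    (hFe : F *ᵥ e = L *ᵥ θminus)
    (θ : Fin p → ℝ) (hθ : θ = θminus - (P * Lᵀ * R⁻¹) *ᵥ e) :
    θ ⬝ᵥ (P⁻¹ *ᵥ θ) =
      θminus ⬝ᵥ (Pminus⁻¹ *ᵥ θminus) +
        e ⬝ᵥ ((F * R⁻¹ * F - F * R⁻¹ - R⁻¹ * F + R⁻¹ * (L * P * Lᵀ) * R⁻¹) *ᵥ e) := by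
  have hSpd : S.PosDef := by
    rw [hS]
    refine Matrix.PosDef.posSemidef_add ?_ hR
    have h1 := hPminus.posSemidef.mul_mul_conjTranspose_same L
    simpa [Matrix.conjTranspose_eq_transpose_of_trivial, Matrix.mul_assoc] using h1
  have hRu : IsUnit R.det := hR.det_pos.ne'.isUnit
  have hPmu : IsUnit Pminus.det := hPminus.det_pos.ne'.isUnit
  have hKS : K * S = Pminus * Lᵀ := by
    rw [hK, Matrix.nonsing_inv_mul_cancel_right _ _ hSpd.det_pos.ne'.isUnit]
  have h1 : K * L * Pminus * Lᵀ = Pminus * Lᵀ - K * R := by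
    rw [hS, Matrix.mul_add] at hKS
    rw [← hKS]
    simp only [Matrix.mul_assoc]
    abel
  set M : Matrix (Fin p) (Fin p) ℝ := Pminus⁻¹ + Lᵀ * R⁻¹ * L with hM
  have h2 : (1 - K * L) * Pminus * Lᵀ = K * R := by
    rw [Matrix.sub_mul, Matrix.sub_mul, Matrix.one_mul, h1]
    abel
  have hPM : P * M = 1 := by
    rw [hP, hM, Matrix.mul_add, Matrix.mul_nonsing_inv_cancel_right _ _ hPmu]
    have : (1 - K * L) * Pminus * (Lᵀ * R⁻¹ * L) =
        (1 - K * L) * Pminus * Lᵀ * R⁻¹ * L := by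
      simp only [Matrix.sub_mul, Matrix.one_mul, Matrix.mul_assoc]
    rw [this, h2, Matrix.mul_nonsing_inv_cancel_right _ _ hRu]
    noncomm_ring
  have hMP : M * P = 1 := mul_eq_one_comm.mp hPM
  have hPinv : P⁻¹ = M := Matrix.inv_eq_right_inv hPM
  have hRT : Rᵀ = R := hR.isHermitian.eq
  have hRinvT : R⁻¹ᵀ = R⁻¹ := by rw [Matrix.transpose_nonsing_inv, hRT]
  have hPmT : Pminusᵀ = Pminus := hPminus.isHermitian.eq
  have hMT : Mᵀ = M := by
    rw [hM]
    simp [Matrix.transpose_add, Matrix.transpose_mul, hRinvT,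
      Matrix.transpose_nonsing_inv, hPmT, Matrix.mul_assoc]
  have hFT : Fᵀ = F := hF
  subst hθ
  rw [hPinv]
  set u : Fin p → ℝ := Lᵀ *ᵥ (R⁻¹ *ᵥ e) with hu
  have hPuE : (P * Lᵀ * R⁻¹) *ᵥ e = P *ᵥ u := by
    rw [hu, Matrix.mulVec_mulVec, Matrix.mulVec_mulVec, Matrix.mul_assoc]
  rw [hPuE]
  have hMPu : M *ᵥ (P *ᵥ u) = u := by
    rw [Matrix.mulVec_mulVec, hMP, Matrix.one_mulVec]
  have hPTM : Pᵀ * M = 1 := by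
    rw [← hMT, ← Matrix.transpose_mul, hMP, Matrix.transpose_one]
  have hPuM : ∀ x : Fin p → ℝ, (P *ᵥ u) ⬝ᵥ (M *ᵥ x) = u ⬝ᵥ x := by
    intro x
    rw [ekf_dp_swap, Matrix.mulVec_mulVec, hPTM, Matrix.one_mulVec]
  rw [Matrix.mulVec_sub, hMPu]
  simp only [sub_dotProduct, dotProduct_sub, hPuM]
  have hMθ : θminus ⬝ᵥ (M *ᵥ θminus) =
      θminus ⬝ᵥ (Pminus⁻¹ *ᵥ θminus) + e ⬝ᵥ ((F * R⁻¹ * F) *ᵥ e) := by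
    rw [hM, Matrix.add_mulVec, dotProduct_add]
    congr 1
    rw [← Matrix.mulVec_mulVec, ← Matrix.mulVec_mulVec, ← ekf_dp_swap L, ← hFe,
      ekf_dp_swap F, hFT, Matrix.mulVec_mulVec, Matrix.mulVec_mulVec, Matrix.mul_assoc]
  have hθu : θminus ⬝ᵥ u = e ⬝ᵥ ((F * R⁻¹) *ᵥ e) := by
    rw [hu, ← ekf_dp_swap L, ← hFe, ekf_dp_swap F, hFT, Matrix.mulVec_mulVec]
  have huθ : u ⬝ᵥ θminus = e ⬝ᵥ ((R⁻¹ * F) *ᵥ e) := by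
    rw [hu, ekf_dp_swap Lᵀ, Matrix.transpose_transpose, ← hFe, ekf_dp_swap R⁻¹, hRinvT,
      Matrix.mulVec_mulVec]
  have hPuu : (P *ᵥ u) ⬝ᵥ u = e ⬝ᵥ ((R⁻¹ * (L * P * Lᵀ) * R⁻¹) *ᵥ e) := by
    rw [dotProduct_comm, hu, ekf_dp_swap Lᵀ, Matrix.transpose_transpose,
      ekf_dp_swap R⁻¹, hRinvT]
    simp only [Matrix.mulVec_mulVec, Matrix.mul_assoc]
  rw [hMθ, hθu, huθ, hPuu]
  have hexp : (F * R⁻¹ * F - F * R⁻¹ - R⁻¹ * F + R⁻¹ * (L * P * Lᵀ) * R⁻¹) *ᵥ e =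
      (F * R⁻¹ * F) *ᵥ e - (F * R⁻¹) *ᵥ e - (R⁻¹ * F) *ᵥ e
        + (R⁻¹ * (L * P * Lᵀ) * R⁻¹) *ᵥ e := by
    rw [Matrix.add_mulVec, Matrix.sub_mulVec, Matrix.sub_mulVec]
  rw [hexp, dotProduct_add, dotProduct_sub, dotProduct_sub]
  ring
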